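/- Let F̃ : (−1,1) × ℝ → ℝ be the real analytic function satisfying F̃(w,u) = w·( u/(1 − ((1−w)/(1+w))^u) − u/2 ) for w ≠ 0, u ≠ 0. Then for every natural number j: if j is odd, the j-th partial derivative ∂^j F̃/∂w^j (0,u) vanishes for every u ∈ ℝ; and if j is even, there exists a real polynomial P_j of degree at most j containing only even powers of its variable such that ∂^j F̃/∂w^j (0,u) = P_j(u) for every u ∈ ℝ. -/

import Mathlib

open Topology Filter Set Polynomial

section Aux

variable {E F' : Type*} [NormedAddCommGroup E] [NormedSpace ℝ E]
  [NormedAddCommGroup F'] [NormedSpace ℝ F']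

private lemma fderiv_comp_add_right'' (f : E → F') (c x : E) :
    fderiv ℝ (fun y => f (y + c)) x = fderiv ℝ f (x + c) := by
  by_cases h : DifferentiableAt ℝ f (x + c)
  · have h1 : HasFDerivAt (fun y : E => y + c) (ContinuousLinearMap.id ℝ E) x :=
      (hasFDerivAt_id x).add_const c
    have h2 := h.hasFDerivAt.comp x h1
    simpa [Function.comp_def] using h2.fderiv
  · rw [fderiv_zero_of_not_differentiableAt h, fderiv_zero_of_not_differentiableAt]
    intro h'
    apply h
    have hx : (x + c) + -c = x := by abel
    have h3 : DifferentiableAt ℝ (fun y : E => y + -c) (x + c) :=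
      (differentiable_id.add_const _).differentiableAt
    have h4 : DifferentiableAt ℝ ((fun y => f (y + c)) ∘ (fun y : E => y + -c)) (x + c) :=
      DifferentiableAt.comp (x + c) (by rw [hx]; exact h') h3
    have h5 : ((fun y => f (y + c)) ∘ (fun y : E => y + -c)) = f := by
      funext y; simp [Function.comp]
    rwa [h5] at h4

private lemma iteratedFDeriv_comp_add_right'' (n : ℕ) (f : E → F') (c : E) :
    iteratedFDeriv ℝ n (fun y => f (y + c)) = fun x => iteratedFDeriv ℝ n f (x + c) := by
  induction n with
  | zero =>
    funext x; ext m; simp [iteratedFDeriv_zero_apply]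
  | succ n ih =>
    funext x; ext m
    rw [iteratedFDeriv_succ_apply_left, iteratedFDeriv_succ_apply_left, ih,
      fderiv_comp_add_right'' (iteratedFDeriv ℝ n f) c x]

private lemma slice_lemma {f : ℝ × ℝ → ℝ} {s : Set (ℝ × ℝ)} (hs : IsOpen s)
    (hf : ContDiffOn ℝ (⊤ : ℕ∞) f s) (g : ℝ →L[ℝ] ℝ × ℝ) (h0 : g 0 ∈ s) (j : ℕ) :
    iteratedDeriv j (fun w => f (g w)) 0 = iteratedFDeriv ℝ j f (g 0) (fun _ => g 1) := by
  have hpre : IsOpen (g ⁻¹' s) := hs.preimage g.continuous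
  have h0' : (0 : ℝ) ∈ g ⁻¹' s := h0
  have hcomp := g.iteratedFDerivWithin_comp_right (i := j) hf hs.uniqueDiffOn hpre.uniqueDiffOn
    h0' (by exact_mod_cast le_top)
  rw [iteratedDeriv_eq_iteratedFDeriv]
  have e1 : iteratedFDeriv ℝ j (fun w => f (g w)) 0
      = iteratedFDerivWithin ℝ j (f ∘ g) (g ⁻¹' s) 0 := by
    rw [iteratedFDerivWithin_of_isOpen j hpre h0']; rfl
  rw [e1, hcomp, iteratedFDerivWithin_of_isOpen j hs h0]
  rfl

private lemma vanish_ext {D : ℝ × ℝ → ℝ} {S : Set (ℝ × ℝ)} (hS : IsOpen S)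
    (hc : ∀ p ∈ S, ContinuousAt D p)
    (h0 : ∀ p ∈ S, p.1 ≠ 0 → p.2 ≠ 0 → D p = 0) : ∀ p ∈ S, D p = 0 := by
  classical
  intro p hp
  set γ : ℝ → ℝ × ℝ := fun t => (if p.1 = 0 then t else p.1, if p.2 = 0 then t else p.2) with hγ
  have hγ0 : γ 0 = p := by
    have e1 : (if p.1 = 0 then (0:ℝ) else p.1) = p.1 := by split_ifs with h; exacts [h.symm, rfl]
    have e2 : (if p.2 = 0 then (0:ℝ) else p.2) = p.2 := by split_ifs with h; exacts [h.symm, rfl]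
    simp only [hγ, e1, e2]
  have hγcont : Continuous γ := by
    apply Continuous.prodMk <;> split_ifs <;>
      first | exact continuous_id | exact continuous_const
  have htend : Tendsto γ (𝓝[≠] (0:ℝ)) (𝓝 p) := by
    have h := hγcont.tendsto 0
    rw [hγ0] at h
    exact h.mono_left nhdsWithin_le_nhds
  have hmemev : ∀ᶠ t in 𝓝[≠] (0:ℝ), γ t ∈ S := htend (hS.mem_nhds hp)
  have hev : ∀ᶠ t in 𝓝[≠] (0:ℝ), D (γ t) = 0 := by
    filter_upwards [hmemev, self_mem_nhdsWithin] with t hmem ht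
    refine h0 _ hmem ?_ ?_
    · by_cases h : p.1 = 0
      · simpa [hγ, h] using ht
      · simpa [hγ, h] using h
    · by_cases h : p.2 = 0
      · simpa [hγ, h] using ht
      · simpa [hγ, h] using h
  have h1 : Tendsto (fun t => D (γ t)) (𝓝[≠] (0:ℝ)) (𝓝 (D p)) := (hc p hp).tendsto.comp htend
  have h2 : Tendsto (fun t => D (γ t)) (𝓝[≠] (0:ℝ)) (𝓝 0) :=
    Tendsto.congr' (by filter_upwards [hev] with t h using h.symm) tendsto_const_nhds
  exact tendsto_nhds_unique h1 h2

private lemma multilinear_eval_poly (j : ℕ)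
    (T : ContinuousMultilinearMap ℝ (fun _ : Fin j => ℝ × ℝ) ℝ) :
    ∃ Q : Polynomial ℝ, Q.natDegree ≤ j ∧ ∀ u : ℝ, T (fun _ => (1, u)) = Q.eval u := by
  classical
  refine ⟨∑ s : Finset (Fin j),
      Polynomial.C (T (s.piecewise (fun _ => ((0:ℝ), (1:ℝ))) (fun _ => ((1:ℝ), (0:ℝ))))) *
        Polynomial.X ^ s.card, ?_, ?_⟩
  · refine Polynomial.natDegree_sum_le_of_forall_le _ _ fun s _ => ?_
    exact (Polynomial.natDegree_C_mul_X_pow_le _ _).trans (by simpa using Finset.card_le_univ s)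
  · intro u
    have key : (fun _ : Fin j => ((1:ℝ), u)) =
        (fun _ : Fin j => u • ((0:ℝ), (1:ℝ))) + fun _ => ((1:ℝ), (0:ℝ)) := by
      funext i
      simp [Prod.ext_iff]
    have hadd := T.toMultilinearMap.map_add_univ
      (fun _ : Fin j => u • ((0:ℝ), (1:ℝ))) (fun _ => ((1:ℝ), (0:ℝ)))
    simp only [ContinuousMultilinearMap.coe_coe] at hadd
    rw [key, hadd, Polynomial.eval_finset_sum]
    refine Finset.sum_congr rfl fun s _ => ?_
    have hsp : (s.piecewise (fun _ : Fin j => u • ((0:ℝ), (1:ℝ))) fun _ => ((1:ℝ), (0:ℝ))) =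
        fun i => (if i ∈ s then u else 1) •
          (s.piecewise (fun _ : Fin j => ((0:ℝ), (1:ℝ))) fun _ => ((1:ℝ), (0:ℝ))) i := by
      funext i
      by_cases h : i ∈ s <;> simp [Finset.piecewise, h]
    have hsmul := T.toMultilinearMap.map_smul_univ (fun i : Fin j => if i ∈ s then u else (1:ℝ))
      (s.piecewise (fun _ : Fin j => ((0:ℝ), (1:ℝ))) fun _ => ((1:ℝ), (0:ℝ)))
    simp only [ContinuousMultilinearMap.coe_coe] at hsmul
    rw [hsp, hsmul, Finset.prod_ite_mem, Finset.univ_inter, Finset.prod_const]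
    rw [Polynomial.eval_mul, Polynomial.eval_C, Polynomial.eval_pow, Polynomial.eval_X,
      smul_eq_mul, mul_comm]

private lemma analyticAt_rlog {x : ℝ} (hx : 0 < x) : AnalyticAt ℝ Real.log x := by
  have ha : AnalyticAt ℝ (fun y : ℝ => (y : ℂ)) x := Complex.ofRealCLM.analyticAt x
  have hb : AnalyticAt ℝ Complex.log (x : ℂ) :=
    (analyticAt_clog (Complex.ofReal_mem_slitPlane.2 hx)).restrictScalars
  have h1 : AnalyticAt ℝ (fun y : ℝ => (Complex.log (y : ℂ)).re) x :=
    (Complex.reCLM.analyticAt _).comp (hb.comp ha)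
  have h2 : (fun y : ℝ => (Complex.log (y : ℂ)).re) = Real.log :=
    funext fun y => Complex.log_ofReal_re y
  rwa [h2] at h1

private lemma alg_core1 (x u w : ℝ) (hx0 : x ≠ 0) (hx1 : x ≠ 1) :
    w * (u / (1 - x) - u / 2) = -w * (u / (1 - x⁻¹) - u / 2) := by
  have h1 : 1 - x ≠ 0 := sub_ne_zero.2 (Ne.symm hx1)
  have h2 : x - 1 ≠ 0 := sub_ne_zero.2 hx1
  rw [show 1 - x⁻¹ = (x - 1) / x by field_simp, div_div_eq_mul_div]
  field_simp
  ring

private lemma alg_core2 (x u w : ℝ) (hx0 : x ≠ 0) (hx1 : x ≠ 1) :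
    w * (u / (1 - x) - u / 2) = w * ((-u) / (1 - x⁻¹) - (-u) / 2) := by
  have h1 : 1 - x ≠ 0 := sub_ne_zero.2 (Ne.symm hx1)
  have h2 : x - 1 ≠ 0 := sub_ne_zero.2 hx1
  rw [show 1 - x⁻¹ = (x - 1) / x by field_simp, div_div_eq_mul_div]
  field_simp
  ring

private lemma alg_core3 {x l w u : ℝ} (hw : w ≠ 0) (hu : u ≠ 0) (hl : l ≠ 0) (hx1 : x ≠ 1) :
    w * (u / (1 - x) - u / 2) = -(l / w)⁻¹ * ((x - 1) / (u * l))⁻¹ - u * w / 2 := by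
  have h1 : 1 - x ≠ 0 := sub_ne_zero.2 (Ne.symm hx1)
  have h2 : x - 1 ≠ 0 := sub_ne_zero.2 hx1
  field_simp
  ring

private lemma alg_evenw {w u : ℝ} (h1 : -1 < w) (h2 : w < 1) (hw : w ≠ 0) (hu : u ≠ 0) :
    w * (u / (1 - ((1 - w) / (1 + w)) ^ u) - u / 2)
      = (-w) * (u / (1 - ((1 - -w) / (1 + -w)) ^ u) - u / 2) := by
  have h1w : (1:ℝ) + w ≠ 0 := by linarith
  have h2w : (1:ℝ) - w ≠ 0 := by linarith
  have hpos : (0:ℝ) < (1 - w) / (1 + w) := div_pos (by linarith) (by linarith)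
  have hpos' : (0:ℝ) < (1 + w) / (1 - w) := div_pos (by linarith) (by linarith)
  have hne1 : (1 - w) / (1 + w) ≠ 1 := by
    intro h
    rw [div_eq_one_iff_eq h1w] at h
    apply hw; linarith
  set t := Real.log ((1 - w) / (1 + w)) with ht
  have htne : t ≠ 0 := by
    intro h
    rcases Real.log_eq_zero.1 h with h' | h' | h'
    · exact absurd h' (ne_of_gt hpos)
    · exact hne1 h'
    · rw [h'] at hpos; linarith
  have hlt : Real.log ((1 + w) / (1 - w)) = -t := by
    rw [ht, ← Real.log_inv, inv_div]
  have hA : ((1 - w) / (1 + w) : ℝ) ^ u = Real.exp (t * u) := Real.rpow_def_of_pos hpos u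
  have hB : ((1 + w) / (1 - w) : ℝ) ^ u = Real.exp (-(t * u)) := by
    rw [Real.rpow_def_of_pos hpos' u, hlt]; ring_nf
  have hAne : Real.exp (t * u) ≠ 1 := by
    intro h
    exact mul_ne_zero htne hu (Real.exp_injective (h.trans Real.exp_zero.symm))
  rw [show (1 - -w) = 1 + w by ring, show (1 + -w) = 1 - w by ring, hA, hB,
    Real.exp_neg]
  exact alg_core1 _ _ _ (Real.exp_ne_zero _) hAne

private lemma alg_evenu {w u : ℝ} (h1 : -1 < w) (h2 : w < 1) (hw : w ≠ 0) (hu : u ≠ 0) :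
    w * (u / (1 - ((1 - w) / (1 + w)) ^ u) - u / 2)
      = w * ((-u) / (1 - ((1 - w) / (1 + w)) ^ (-u)) - (-u) / 2) := by
  have h1w : (1:ℝ) + w ≠ 0 := by linarith
  have hpos : (0:ℝ) < (1 - w) / (1 + w) := div_pos (by linarith) (by linarith)
  have hne1 : (1 - w) / (1 + w) ≠ 1 := by
    intro h
    rw [div_eq_one_iff_eq h1w] at h
    apply hw; linarith
  set t := Real.log ((1 - w) / (1 + w)) with ht
  have htne : t ≠ 0 := by
    intro h
    rcases Real.log_eq_zero.1 h with h' | h' | h'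
    · exact absurd h' (ne_of_gt hpos)
    · exact hne1 h'
    · rw [h'] at hpos; linarith
  have hA : ((1 - w) / (1 + w) : ℝ) ^ u = Real.exp (t * u) := Real.rpow_def_of_pos hpos u
  have hB : ((1 - w) / (1 + w) : ℝ) ^ (-u) = (Real.exp (t * u))⁻¹ := by
    rw [Real.rpow_neg hpos.le, hA]
  have hAne : Real.exp (t * u) ≠ 1 := by
    intro h
    exact mul_ne_zero htne hu (Real.exp_injective (h.trans Real.exp_zero.symm))
  rw [hA, hB]
  exact alg_core2 _ _ _ (Real.exp_ne_zero _) hAne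

private lemma alg_K {w u : ℝ} (h1 : -1 < w) (h2 : w < 1) (hw : w ≠ 0) (hu : u ≠ 0) :
    w * (u / (1 - ((1 - w) / (1 + w)) ^ u) - u / 2)
      = -(dslope (fun z => Real.log ((1 - z) / (1 + z))) 0 w)⁻¹ *
          (dslope Real.exp 0
            (u * w * dslope (fun z => Real.log ((1 - z) / (1 + z))) 0 w))⁻¹
        - u * w / 2 := by
  have h1w : (1:ℝ) + w ≠ 0 := by linarith
  have hpos : (0:ℝ) < (1 - w) / (1 + w) := div_pos (by linarith) (by linarith)
  have hne1 : (1 - w) / (1 + w) ≠ 1 := by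
    intro h
    rw [div_eq_one_iff_eq h1w] at h
    apply hw; linarith
  set L : ℝ → ℝ := fun z => Real.log ((1 - z) / (1 + z)) with hLdef
  have hL0 : L 0 = 0 := by simp [hLdef]
  have htne : L w ≠ 0 := by
    intro h
    rcases Real.log_eq_zero.1 h with h' | h' | h'
    · exact absurd h' (ne_of_gt hpos)
    · exact hne1 h'
    · rw [h'] at hpos; linarith
  have hdW : dslope L 0 w = L w / w := by
    rw [dslope_of_ne _ hw, slope_def_field, hL0, sub_zero, sub_zero]
  have harg : u * w * (L w / w) = u * L w := by field_simp
  have hargne : u * L w ≠ 0 := mul_ne_zero hu htne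
  have hdE : dslope Real.exp 0 (u * L w) = (Real.exp (u * L w) - 1) / (u * L w) := by
    rw [dslope_of_ne _ hargne, slope_def_field, Real.exp_zero, sub_zero]
  have hA : ((1 - w) / (1 + w) : ℝ) ^ u = Real.exp (u * L w) := by
    rw [Real.rpow_def_of_pos hpos u, mul_comm]
  have hAne : Real.exp (u * L w) ≠ 1 := by
    intro h
    exact mul_ne_zero hu htne (Real.exp_injective (h.trans Real.exp_zero.symm))
  rw [hdW, harg, hdE, hA]
  exact alg_core3 hw hu htne hAne

end Aux

/-- (Lemma 5.4, part 3.)  Let `F̃ : ℝ × ℝ → ℝ` be real analytic on the strip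
`(−1,1) × ℝ` and satisfy `F̃(w,u) = w·(u/(1 − ((1−w)/(1+w))^u) − u/2)` for `w ≠ 0`, `u ≠ 0`.
Then for every `j : ℕ`: if `j` is odd, `∂ʲF̃/∂wʲ(0,u) = 0` for all `u`; if `j` is even, there
is a real polynomial `P` of degree at most `j` with only even-degree terms such that
`∂ʲF̃/∂wʲ(0,u) = P(u)` for all `u`. -/
theorem statement_6 (F : ℝ × ℝ → ℝ)
    (hF : AnalyticOnNhd ℝ F {p : ℝ × ℝ | -1 < p.1 ∧ p.1 < 1})
    (heq : ∀ w u : ℝ, -1 < w → w < 1 → w ≠ 0 → u ≠ 0 →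
      F (w, u) = w * (u / (1 - ((1 - w) / (1 + w)) ^ u) - u / 2)) :
    ∀ j : ℕ,
      (Odd j → ∀ u : ℝ, iteratedDeriv j (fun w => F (w, u)) 0 = 0) ∧
      (Even j → ∃ P : Polynomial ℝ, P.natDegree ≤ j ∧ (∀ k : ℕ, Odd k → P.coeff k = 0) ∧
        ∀ u : ℝ, iteratedDeriv j (fun w => F (w, u)) 0 = P.eval u) := by
  classical
  set S : Set (ℝ × ℝ) := {p : ℝ × ℝ | -1 < p.1 ∧ p.1 < 1} with hSdef
  have hSopen : IsOpen S :=
    (isOpen_lt continuous_const continuous_fst).inter (isOpen_lt continuous_fst continuous_const)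
  have hFc : ∀ p ∈ S, ContinuousAt F p := fun p hp => (hF p hp).continuousAt
  have hmemS : ∀ u : ℝ, ((0:ℝ), u) ∈ S := fun u => ⟨by norm_num, by norm_num⟩
  -- even in w
  have hevenw : ∀ p : ℝ × ℝ, p ∈ S → F p = F (-p.1, p.2) := by
    intro p hp
    have key := vanish_ext (D := fun q : ℝ × ℝ => F q - F (-q.1, q.2)) hSopen ?_ ?_ p hp
    · have key' : F p - F (-p.1, p.2) = 0 := key
      linarith
    · intro q hq
      have hmem : ((-q.1, q.2) : ℝ × ℝ) ∈ S :=
        ⟨show -1 < -q.1 by linarith [hq.2], show -q.1 < 1 by linarith [hq.1]⟩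
      have hinner : ContinuousAt (fun q : ℝ × ℝ => ((-q.1, q.2) : ℝ × ℝ)) q :=
        (continuous_fst.neg.prodMk continuous_snd).continuousAt
      exact (hFc q hq).sub (ContinuousAt.comp (hFc _ hmem) hinner)
    · intro q hq hq1 hq2
      rw [sub_eq_zero, show F q = F (q.1, q.2) from by rw [Prod.mk.eta],
        heq q.1 q.2 hq.1 hq.2 hq1 hq2,
        heq (-q.1) q.2 (by linarith [hq.2]) (by linarith [hq.1]) (neg_ne_zero.2 hq1) hq2]
      exact alg_evenw hq.1 hq.2 hq1 hq2
  -- even in u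
  have hevenu : ∀ p : ℝ × ℝ, p ∈ S → F p = F (p.1, -p.2) := by
    intro p hp
    have key := vanish_ext (D := fun q : ℝ × ℝ => F q - F (q.1, -q.2)) hSopen ?_ ?_ p hp
    · have key' : F p - F (p.1, -p.2) = 0 := key
      linarith
    · intro q hq
      have hmem : ((q.1, -q.2) : ℝ × ℝ) ∈ S := ⟨hq.1, hq.2⟩
      have hinner : ContinuousAt (fun q : ℝ × ℝ => ((q.1, -q.2) : ℝ × ℝ)) q :=
        (continuous_fst.prodMk continuous_snd.neg).continuousAt
      exact (hFc q hq).sub (ContinuousAt.comp (hFc _ hmem) hinner)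
    · intro q hq hq1 hq2
      rw [sub_eq_zero, show F q = F (q.1, q.2) from by rw [Prod.mk.eta],
        heq q.1 q.2 hq.1 hq.2 hq1 hq2,
        heq q.1 (-q.2) hq.1 hq.2 hq1 (neg_ne_zero.2 hq2)]
      exact alg_evenu hq.1 hq.2 hq1 hq2
  -- the auxiliary analytic function H and K
  set L : ℝ → ℝ := fun z => Real.log ((1 - z) / (1 + z)) with hLdef
  set Lq : ℝ → ℝ := dslope L 0 with hLqdef
  set Ef : ℝ → ℝ := dslope Real.exp 0 with hEfdef
  set H : ℝ × ℝ → ℝ := fun p => -(Lq p.1)⁻¹ * (Ef (p.2 * Lq p.1))⁻¹ - p.2 / 2 with hHdef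
  set K : ℝ × ℝ → ℝ := fun p => H (p.1, p.2 * p.1) with hKdef
  have hLA : AnalyticAt ℝ L 0 := by
    have hinner : AnalyticAt ℝ (fun z : ℝ => (1 - z) / (1 + z)) 0 :=
      (analyticAt_const.sub analyticAt_id).div (analyticAt_const.add analyticAt_id) (by norm_num)
    have h1 : ((1:ℝ) - 0) / (1 + 0) = 1 := by norm_num
    have hg := analyticAt_rlog one_pos
    rw [← h1] at hg
    exact AnalyticAt.comp (f := fun z : ℝ => (1 - z) / (1 + z)) (x := 0) hg hinner
  have hLqA : AnalyticAt ℝ Lq 0 := by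
    obtain ⟨p, hp⟩ := hLA
    exact hp.has_fpower_series_dslope_fslope.analyticAt
  have hLq0 : Lq 0 = -2 := by
    rw [hLqdef, dslope_same]
    have hu : HasDerivAt (fun z : ℝ => 1 - z) (-1) 0 := by
      simpa using (hasDerivAt_id (0:ℝ)).const_sub 1
    have hv : HasDerivAt (fun z : ℝ => 1 + z) 1 0 := by
      simpa using (hasDerivAt_id (0:ℝ)).const_add 1
    have hdiv := hu.div hv (by norm_num)
    have hlog := hdiv.log (by norm_num)
    have : HasDerivAt L (-2) 0 := by
      convert hlog using 1
      all_goals norm_num [hLdef, Pi.div_apply]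
    exact this.deriv
  have hEfA : AnalyticAt ℝ Ef 0 := by
    obtain ⟨p, hp⟩ := analyticAt_rexp (x := (0:ℝ))
    exact hp.has_fpower_series_dslope_fslope.analyticAt
  have hEf0 : Ef 0 = 1 := by
    rw [hEfdef, dslope_same, Real.deriv_exp, Real.exp_zero]
  have hHA : AnalyticAt ℝ H ((0:ℝ), (0:ℝ)) := by
    have hfst : AnalyticAt ℝ (fun p : ℝ × ℝ => p.1) ((0:ℝ), (0:ℝ)) := analyticAt_fst
    have hsnd : AnalyticAt ℝ (fun p : ℝ × ℝ => p.2) ((0:ℝ), (0:ℝ)) := analyticAt_snd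
    have A1 : AnalyticAt ℝ (fun p : ℝ × ℝ => Lq p.1) (0, 0) :=
      AnalyticAt.comp (f := fun p : ℝ × ℝ => p.1) hLqA hfst
    have A2 : AnalyticAt ℝ (fun p : ℝ × ℝ => p.2 * Lq p.1) (0, 0) := hsnd.mul A1
    have hEfA' : AnalyticAt ℝ Ef ((fun p : ℝ × ℝ => p.2 * Lq p.1) ((0:ℝ), (0:ℝ))) := by
      simpa using hEfA
    have A3 : AnalyticAt ℝ (fun p : ℝ × ℝ => Ef (p.2 * Lq p.1)) (0, 0) :=
      AnalyticAt.comp (f := fun p : ℝ × ℝ => p.2 * Lq p.1) hEfA' A2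
    have A4 : AnalyticAt ℝ (fun p : ℝ × ℝ => (Ef (p.2 * Lq p.1))⁻¹) (0, 0) := by
      refine A3.inv ?_
      simp only
      rw [show ((0:ℝ),(0:ℝ)).2 * Lq ((0:ℝ),(0:ℝ)).1 = 0 by simp, hEf0]
      norm_num
    have A5 : AnalyticAt ℝ (fun p : ℝ × ℝ => -(Lq p.1)⁻¹) (0, 0) := by
      refine AnalyticAt.neg (A1.inv ?_)
      simp only
      rw [show Lq ((0:ℝ),(0:ℝ)).1 = Lq 0 from rfl, hLq0]
      norm_num
    exact (A5.mul A4).sub (hsnd.div analyticAt_const (by norm_num))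
  have hKA : AnalyticAt ℝ K ((0:ℝ), (0:ℝ)) := by
    have hi : AnalyticAt ℝ (fun p : ℝ × ℝ => (p.1, p.2 * p.1)) ((0:ℝ), (0:ℝ)) :=
      analyticAt_fst.prod (analyticAt_snd.mul analyticAt_fst)
    have hH' : AnalyticAt ℝ H ((fun p : ℝ × ℝ => (p.1, p.2 * p.1)) ((0:ℝ), (0:ℝ))) := by
      simpa using hHA
    exact AnalyticAt.comp (f := fun p : ℝ × ℝ => (p.1, p.2 * p.1)) hH' hi
  -- a good neighborhood U of the origin
  obtain ⟨U, hUsub, hUopen, hU0⟩ := mem_nhds_iff.1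
    (Filter.inter_mem (hSopen.mem_nhds (hmemS 0)) hKA.eventually_analyticAt)
  have hFKU : ∀ p ∈ U, F p = K p := by
    intro p hp
    have key := vanish_ext (D := fun q : ℝ × ℝ => F q - K q) hUopen ?_ ?_ p hp
    · have key' : F p - K p = 0 := key
      linarith
    · intro q hq
      exact (hFc q (hUsub hq).1).sub (hUsub hq).2.continuousAt
    · intro q hq hq1 hq2
      have hqS := (hUsub hq).1
      rw [sub_eq_zero, show F q = F (q.1, q.2) from by rw [Prod.mk.eta],
        heq q.1 q.2 hqS.1 hqS.2 hq1 hq2]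
      rw [hKdef, hHdef]
      simp only
      rw [show q.2 * q.1 * Lq q.1 = q.2 * q.1 * Lq q.1 from rfl]
      have := alg_K (u := q.2) hqS.1 hqS.2 hq1 hq2
      rw [hLqdef, hLdef]
      convert this using 3 <;> ring
  obtain ⟨ε, hε, hball⟩ := Metric.mem_nhds_iff.1 (hUopen.mem_nhds hU0)
  -- smoothness of H on an open set around the origin
  obtain ⟨W, hWopen, hW0, hWana⟩ : ∃ W : Set (ℝ × ℝ), IsOpen W ∧ ((0:ℝ),(0:ℝ)) ∈ W ∧
      AnalyticOnNhd ℝ H W := by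
    have hmem := hHA.eventually_analyticAt
    obtain ⟨W', hW's, hW'open, hW'0⟩ := mem_nhds_iff.1 hmem
    exact ⟨W', hW'open, hW'0, fun p hp => hW's hp⟩
  have hHC : ContDiffOn ℝ (⊤ : ℕ∞) H W := hWana.contDiffOn hWopen.uniqueDiffOn
  intro j
  constructor
  · -- odd case
    intro hodd u
    have hgerm : (fun w => F (-w, u)) =ᶠ[𝓝 (0:ℝ)] fun w => F (w, u) := by
      filter_upwards [Ioo_mem_nhds (by norm_num : (-1:ℝ) < 0) (by norm_num : (0:ℝ) < 1)] with w hw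
      exact (hevenw (w, u) ⟨hw.1, hw.2⟩).symm
    have h1 := Filter.EventuallyEq.iteratedDeriv_eq j hgerm
    have h2 := iteratedDeriv_comp_neg j (fun w => F (w, u)) 0
    rw [neg_zero] at h2
    rw [h2, Odd.neg_one_pow hodd, neg_one_smul] at h1
    linarith [h1]
  · -- even case
    intro _
    obtain ⟨Q, hQdeg, hQev⟩ := multilinear_eval_poly j (iteratedFDeriv ℝ j H ((0:ℝ), (0:ℝ)))
    set cF : ℝ → ℝ := fun u => iteratedDeriv j (fun w => F (w, u)) 0 with hcFdef
    have hnear : ∀ u : ℝ, |u| < ε / 2 → cF u = Q.eval u := by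
      intro u hu
      have hgerm : (fun w => F (w, u)) =ᶠ[𝓝 (0:ℝ)] fun w => K (w, u) := by
        filter_upwards [Metric.ball_mem_nhds (0:ℝ) (by linarith : (0:ℝ) < ε / 2)] with w hw
        apply hFKU
        apply hball
        rw [Metric.mem_ball, Prod.dist_eq]
        have hw' : |w| < ε / 2 := by simpa [Real.dist_eq] using hw
        simp only [Real.dist_eq, sub_zero]
        apply max_lt <;> linarith
      have e1 : cF u = iteratedDeriv j (fun w => K (w, u)) 0 :=
        Filter.EventuallyEq.iteratedDeriv_eq j hgerm
      set g : ℝ →L[ℝ] ℝ × ℝ := (ContinuousLinearMap.id ℝ ℝ).prod (u • ContinuousLinearMap.id ℝ ℝ)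
        with hgdef
      have hg0mem : g 0 ∈ W := by
        have : g 0 = ((0:ℝ), (0:ℝ)) := by simp [hgdef]
        rw [this]; exact hW0
      have e2 := slice_lemma hWopen hHC g hg0mem j
      have e3 : (fun w => H (g w)) = fun w => K (w, u) := by
        funext w
        have : g w = (w, u * w) := by simp [hgdef]
        rw [this, hKdef]
      have e4 : g 0 = ((0:ℝ), (0:ℝ)) := by simp [hgdef]
      have e5 : g 1 = ((1:ℝ), u) := by simp [hgdef]
      rw [e1, ← e3, e2, e4, e5, hQev u]
    set P : Polynomial ℝ := ∑ k ∈ Finset.range (j + 1),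
      if Even k then Polynomial.C (Q.coeff k) * Polynomial.X ^ k else 0 with hPdef
    have hPdeg : P.natDegree ≤ j := by
      refine Polynomial.natDegree_sum_le_of_forall_le _ _ fun k hk => ?_
      split_ifs
      · exact (Polynomial.natDegree_C_mul_X_pow_le _ _).trans
          (Nat.lt_succ_iff.1 (Finset.mem_range.1 hk))
      · simp
    refine ⟨P, hPdeg, ?_, ?_⟩
    · intro k hk
      rw [hPdef, Polynomial.finset_sum_coeff]
      refine Finset.sum_eq_zero fun i _ => ?_
      split_ifs with h
      · rw [Polynomial.coeff_C_mul, Polynomial.coeff_X_pow, if_neg, mul_zero]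
        intro hki
        rw [hki] at hk
        exact (Nat.not_odd_iff_even.2 h) hk
      · simp
    · intro u
      have hcEven : ∀ v : ℝ, cF (-v) = cF v := by
        intro v
        refine Filter.EventuallyEq.iteratedDeriv_eq j ?_
        filter_upwards [Ioo_mem_nhds (by norm_num : (-1:ℝ) < 0) (by norm_num : (0:ℝ) < 1)]
          with w hw
        exact (hevenu (w, v) ⟨hw.1, hw.2⟩).symm
      have hPQ : ∀ v : ℝ, |v| < ε / 2 → P.eval v = cF v := by
        intro v hv
        have hQv := hnear v hv
        have hQnegv := hnear (-v) (by rwa [abs_neg])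
        have hev : Q.eval v + Q.eval (-v) = 2 * P.eval v := by
          rw [Polynomial.eval_eq_sum_range' (Nat.lt_succ_of_le hQdeg),
            Polynomial.eval_eq_sum_range' (Nat.lt_succ_of_le hQdeg), hPdef,
            Polynomial.eval_finset_sum, ← Finset.sum_add_distrib, Finset.mul_sum]
          refine Finset.sum_congr rfl fun k _ => ?_
          by_cases h : Even k
          · rw [if_pos h, Polynomial.eval_mul, Polynomial.eval_C, Polynomial.eval_pow,
              Polynomial.eval_X, h.neg_pow]
            ring
          · rw [if_neg h, Polynomial.eval_zero, (Nat.not_even_iff_odd.1 h).neg_pow]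
            ring
        have hsum : cF v + cF (-v) = 2 * P.eval v := by rw [hQv, hQnegv]; exact hev
        have h2 := hcEven v
        linarith
      set c' : ℝ → ℝ := fun v =>
        (ContinuousMultilinearMap.apply ℝ (fun _ : Fin j => ℝ × ℝ) ℝ (fun _ => ((1:ℝ), (0:ℝ))))
          (iteratedFDeriv ℝ j F ((0:ℝ), v)) with hc'def
      have hslice : ∀ v : ℝ, cF v = c' v := by
        intro v
        have hFC : ContDiffOn ℝ (⊤ : ℕ∞) F S := hF.contDiffOn hSopen.uniqueDiffOn
        have htrans : ContDiffOn ℝ (⊤ : ℕ∞) (fun p : ℝ × ℝ => F (p + (0, v))) S := by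
          refine hFC.comp ((contDiff_id.add contDiff_const).contDiffOn) ?_
          intro p hp
          constructor
          · simpa using hp.1
          · simpa using hp.2
        have hg0 : (ContinuousLinearMap.inl ℝ ℝ ℝ) 0 ∈ S := by
          simpa using hmemS 0
        have e2 := slice_lemma hSopen htrans (ContinuousLinearMap.inl ℝ ℝ ℝ) hg0 j
        have e3 : (fun w => (fun p : ℝ × ℝ => F (p + (0, v)))
            ((ContinuousLinearMap.inl ℝ ℝ ℝ) w)) = fun w => F (w, v) := by
          funext w
          simp [Prod.ext_iff]
        have e4 := iteratedFDeriv_comp_add_right'' j F ((0:ℝ), v)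
        have e5 : cF v = iteratedFDeriv ℝ j (fun p : ℝ × ℝ => F (p + (0, v)))
            ((ContinuousLinearMap.inl ℝ ℝ ℝ) 0)
            (fun _ => (ContinuousLinearMap.inl ℝ ℝ ℝ) 1) := by
          have hrfl : cF v = iteratedDeriv j (fun w => F (w, v)) 0 := rfl
          rw [hrfl, ← e3]
          exact e2
        rw [e5, congrFun e4]
        have e6 : (ContinuousLinearMap.inl ℝ ℝ ℝ) 0 + ((0:ℝ), v) = ((0:ℝ), v) := by
          simp
        have e7 : ∀ i : Fin j, (ContinuousLinearMap.inl ℝ ℝ ℝ) 1 = ((1:ℝ), (0:ℝ)) := by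
          intro i; simp
        rw [e6]
        rw [hc'def]
        simp
      have hc'A : AnalyticOnNhd ℝ c' Set.univ := by
        intro v _
        have a1 : AnalyticAt ℝ (fun v : ℝ => ((0:ℝ), v)) v := by
          have := (ContinuousLinearMap.inr ℝ ℝ ℝ).analyticAt v
          convert this using 2
          simp
        have a2 : AnalyticAt ℝ (iteratedFDeriv ℝ j F) ((0:ℝ), v) :=
          hF.iteratedFDeriv j ((0:ℝ), v) (hmemS v)
        have a3 : AnalyticAt ℝ (fun v : ℝ => iteratedFDeriv ℝ j F ((0:ℝ), v)) v :=
          AnalyticAt.comp (f := fun v : ℝ => ((0:ℝ), v)) a2 a1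
        exact ((ContinuousMultilinearMap.apply ℝ (fun _ : Fin j => ℝ × ℝ) ℝ
          (fun _ => ((1:ℝ), (0:ℝ)))).analyticAt _).comp a3
      have hPA : AnalyticOnNhd ℝ (fun v : ℝ => P.eval v) Set.univ := by
        have := AnalyticOnNhd.eval_polynomial (𝕜 := ℝ) (A := ℝ) P
        simpa using this
      have hEqOn := hc'A.eqOn_of_preconnected_of_eventuallyEq hPA isPreconnected_univ
        (Set.mem_univ (0:ℝ)) ?_
      · have h := hEqOn (Set.mem_univ u)
        have hrfl : iteratedDeriv j (fun w => F (w, u)) 0 = cF u := rfl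
        rw [hrfl, hslice u]
        exact h
      · filter_upwards [Metric.ball_mem_nhds (0:ℝ) (by linarith : (0:ℝ) < ε / 2)] with v hv
        have hv' : |v| < ε / 2 := by simpa [Real.dist_eq] using hv
        rw [← hslice v, hPQ v hv']
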